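/- Let π be any policy such that for every stage t ≥ 1 and every s ∈ S, a ∈ A(s) with d_t(s,a) > 0, the conservation property x*_s = Σ_{s'∈S} P(s,a,s') · x*_{s'} holds. Then for every t ≥ 1, Σ_{s∈S} Σ_{a∈A(s)} μ_t^π(s,a) · x*_s = x*_{s0}; that is, the expected optimal reachability value is invariant over time under any policy that uses only actions conserving the optimal reachability probabilities. -/

import Mathlib

open scoped ENNReal

section

variable {S A : Type} [Fintype S] [Fintype A] [DecidableEq S] [DecidableEq A]

/-- A policy: a sequence of decision rules, each supported on the available actions. -/
def IsPolicy (avail : S → Finset A) (π : ℕ → S → A → ℝ) : Prop :=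
  ∀ t s, (∀ a, 0 ≤ π t s a) ∧ (∀ a, a ∉ avail s → π t s a = 0) ∧
    (∑ a ∈ avail s, π t s a) = 1

/-- A stationary policy uses the same decision rule at every stage. -/
def IsStationaryPolicy (π : ℕ → S → A → ℝ) : Prop := ∀ t, π t = π 0

/-- Occupancy measures: `occ P avail init π t s a` is `μ^π_{t+1}(s,a)` (stages indexed from 1). -/
def occ (P : S → A → S → ℝ) (avail : S → Finset A) (init : S)
    (π : ℕ → S → A → ℝ) : ℕ → S → A → ℝ
  | 0 => fun s a => if s = init then π 0 s a else 0
  | t + 1 => fun s' a' =>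
      π (t + 1) s' a' * ∑ s : S, ∑ a ∈ avail s, P s a s' * occ P avail init π t s a

/-- Expected residence time `ξ^π(s,a) ∈ [0,∞]`. -/
noncomputable def resTime (P : S → A → S → ℝ) (avail : S → Finset A) (init : S)
    (π : ℕ → S → A → ℝ) (s : S) (a : A) : ℝ≥0∞ :=
  ∑' t : ℕ, ENNReal.ofReal (occ P avail init π t s a)

/-- Probability of reaching the absorbing set `B`. -/
noncomputable def reachProb (P : S → A → S → ℝ) (avail : S → Finset A) (B : Finset S)
    (init : S) (π : ℕ → S → A → ℝ) : ℝ≥0∞ :=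
  ⨆ t : ℕ, ∑ s ∈ B, ∑ a ∈ avail s, ENNReal.ofReal (occ P avail init π t s a)

/-- `x*_s`: optimal probability of reaching `B` starting from `s`. -/
noncomputable def xstar (P : S → A → S → ℝ) (avail : S → Finset A) (B : Finset S)
    (s : S) : ℝ≥0∞ :=
  ⨆ π : {π : ℕ → S → A → ℝ // IsPolicy avail π}, reachProb P avail B s π.1

/-- A state is absorbing if every available action loops on it with probability 1. -/
def Absorbing (P : S → A → S → ℝ) (avail : S → Finset A) (s : S) : Prop :=
  ∀ a ∈ avail s, P s a s = 1

/-- Expected total cost `f_c(π) ∈ [0,∞]`. -/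
noncomputable def totalCost (P : S → A → S → ℝ) (avail : S → Finset A) (init : S)
    (c : S → A → ℝ) (π : ℕ → S → A → ℝ) : ℝ≥0∞ :=
  ∑ s : S, ∑ a ∈ avail s, resTime P avail init π s a * ENNReal.ofReal (c s a)


lemma occ_nonneg (P : S → A → S → ℝ) (avail : S → Finset A) (init : S)
    (π : ℕ → S → A → ℝ) (hπ : IsPolicy avail π) (hP0 : ∀ s a s', 0 ≤ P s a s') :
    ∀ t s a, 0 ≤ occ P avail init π t s a := by
  intro t
  induction t with
  | zero =>
    intro s a
    simp only [occ]
    split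
    · exact (hπ 0 s).1 a
    · exact le_refl 0
  | succ t ih =>
    intro s a
    exact mul_nonneg ((hπ _ s).1 a)
      (Finset.sum_nonneg fun s' _ => Finset.sum_nonneg fun a' _ =>
        mul_nonneg (hP0 _ _ _) (ih _ _))

lemma occ_pos_pi_pos (P : S → A → S → ℝ) (avail : S → Finset A) (init : S)
    (π : ℕ → S → A → ℝ) (hπ : IsPolicy avail π) (t : ℕ) (s : S) (a : A)
    (h : 0 < occ P avail init π t s a) : 0 < π t s a := by
  rcases lt_or_eq_of_le ((hπ t s).1 a) with h' | h'
  · exact h'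
  · exfalso
    cases t with
    | zero =>
      simp only [occ] at h
      split at h
      · exact absurd h (by rw [← h']; simp)
      · exact absurd h (by simp)
    | succ t =>
      simp only [occ, ← h', zero_mul] at h
      exact absurd h (by simp)

/-- Under any policy that uses only actions conserving the optimal reachability probabilities
(`x*_s = Σ_{s'} P(s,a,s')·x*_{s'}` whenever `d_t(s,a) > 0`), the expected optimal reachability
value is invariant over time: `Σ_s Σ_{a∈A(s)} μ^π_t(s,a)·x*_s = x*_{s0}` for every stage `t ≥ 1`. -/
theorem conserving_policy_expected_value_invariant
    (P : S → A → S → ℝ) (avail : S → Finset A) (s0 : S) (B : Finset S)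
    (havail : ∀ s, (avail s).Nonempty)
    (hP0 : ∀ s a s', 0 ≤ P s a s')
    (hP1 : ∀ s, ∀ a ∈ avail s, (∑ s' : S, P s a s') = 1)
    (habs : ∀ s ∈ B, Absorbing P avail s)
    (π : ℕ → S → A → ℝ) (hπ : IsPolicy avail π)
    (hcons : ∀ t s, ∀ a ∈ avail s, 0 < π t s a →
      xstar P avail B s = ∑ s' : S, ENNReal.ofReal (P s a s') * xstar P avail B s') :
    ∀ t : ℕ,
      (∑ s : S, ∑ a ∈ avail s,
        ENNReal.ofReal (occ P avail s0 π t s a) * xstar P avail B s) =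
        xstar P avail B s0 := by
  intro t
  induction t with
  | zero =>
    rw [Finset.sum_eq_single s0]
    · simp only [occ, if_pos rfl, if_true]
      rw [← Finset.sum_mul, ← ENNReal.ofReal_sum_of_nonneg (fun a _ => (hπ 0 s0).1 a),
        (hπ 0 s0).2.2]
      simp
    · intro s _ hs
      apply Finset.sum_eq_zero
      intro a _
      simp [occ, hs]
    · simp
  | succ t ih =>
    -- abbreviation for the flow into s'
    set ν : S → ℝ := fun s' => ∑ s : S, ∑ a ∈ avail s, P s a s' * occ P avail s0 π t s a
      with hν
    have hνnn : ∀ s', 0 ≤ ν s' := fun s' =>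
      Finset.sum_nonneg fun s _ => Finset.sum_nonneg fun a _ =>
        mul_nonneg (hP0 _ _ _) (occ_nonneg P avail s0 π hπ hP0 t s a)
    have step1 : (∑ s : S, ∑ a ∈ avail s,
        ENNReal.ofReal (occ P avail s0 π (t + 1) s a) * xstar P avail B s)
        = ∑ s' : S, ENNReal.ofReal (ν s') * xstar P avail B s' := by
      refine Finset.sum_congr rfl fun s' _ => ?_
      have : ∀ a ∈ avail s', ENNReal.ofReal (occ P avail s0 π (t + 1) s' a) * xstar P avail B s'
          = ENNReal.ofReal (π (t + 1) s' a) * (ENNReal.ofReal (ν s') * xstar P avail B s') := by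
        intro a _
        simp only [occ]
        rw [ENNReal.ofReal_mul ((hπ _ s').1 a), mul_assoc]
      rw [Finset.sum_congr rfl this, ← Finset.sum_mul,
        ← ENNReal.ofReal_sum_of_nonneg (fun a _ => (hπ _ s').1 a), (hπ _ s').2.2]
      simp
    rw [step1, ← ih]
    have step2 : ∀ s', ENNReal.ofReal (ν s') * xstar P avail B s'
        = ∑ s : S, ∑ a ∈ avail s,
            ENNReal.ofReal (occ P avail s0 π t s a) * (ENNReal.ofReal (P s a s') * xstar P avail B s') := by
      intro s'
      rw [hν]
      rw [ENNReal.ofReal_sum_of_nonneg (fun s _ => Finset.sum_nonneg fun a _ =>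
        mul_nonneg (hP0 _ _ _) (occ_nonneg P avail s0 π hπ hP0 t s a)), Finset.sum_mul]
      refine Finset.sum_congr rfl fun s _ => ?_
      rw [ENNReal.ofReal_sum_of_nonneg (fun a _ =>
        mul_nonneg (hP0 _ _ _) (occ_nonneg P avail s0 π hπ hP0 t s a)), Finset.sum_mul]
      refine Finset.sum_congr rfl fun a _ => ?_
      rw [ENNReal.ofReal_mul (hP0 _ _ _)]
      ring
    rw [Finset.sum_congr rfl fun s' _ => step2 s']
    rw [Finset.sum_comm]
    refine Finset.sum_congr rfl fun s _ => ?_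
    rw [Finset.sum_comm]
    refine Finset.sum_congr rfl fun a ha => ?_
    rw [← Finset.mul_sum]
    rcases lt_or_eq_of_le (occ_nonneg P avail s0 π hπ hP0 t s a) with h | h
    · rw [← hcons t s a ha (occ_pos_pi_pos P avail s0 π hπ t s a h)]
    · rw [← h]; simp

end
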